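/- The function x ↦ c_x defined by c_x = ∫₀¹ h(1/(1 + e^{λ(x)/y})) dy, where λ(x) > 0 is the unique solution of ∫₀¹ 1/(y(1 + e^{λ/y})) dy = x, is strictly increasing on (0,∞), satisfies c_x → 0 as x → 0⁺, and c_x → 1 as x → ∞. -/

import Mathlib

open Filter

/-- Binary entropy function (base 2). -/
noncomputable def binEnt (p : ℝ) : ℝ :=
  -p * Real.logb 2 p - (1 - p) * Real.logb 2 (1 - p)

open MeasureTheory Real Set

lemma binEnt_eq (p : ℝ) : binEnt p = Real.binEntropy p / Real.log 2 := by
  unfold binEnt Real.binEntropy Real.logb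
  rw [Real.log_inv, Real.log_inv]
  ring

lemma binEnt_half : binEnt (1/2 : ℝ) = 1 := by
  rw [binEnt_eq, show (1/2 : ℝ) = 2⁻¹ by norm_num, Real.binEntropy_two_inv]
  exact div_self (Real.log_ne_zero_of_pos_of_ne_one two_pos (by norm_num))

lemma continuous_binEnt : Continuous binEnt := by
  have : binEnt = fun p => Real.binEntropy p / Real.log 2 := funext binEnt_eq
  rw [this]
  exact Real.binEntropy_continuous.div_const _

lemma binEnt_nonneg {p : ℝ} (h0 : 0 ≤ p) (h1 : p ≤ 1) : 0 ≤ binEnt p := by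
  rw [binEnt_eq]
  exact div_nonneg (Real.binEntropy_nonneg h0 h1) (Real.log_nonneg one_le_two)

lemma binEnt_le_one (p : ℝ) : binEnt p ≤ 1 := by
  rw [binEnt_eq, div_le_one (Real.log_pos one_lt_two)]
  exact Real.binEntropy_le_log_two

lemma measurable_div_fun (l : ℝ) : Measurable (fun y : ℝ => l / y) :=
  measurable_const.div measurable_id

lemma measurable_fint (l : ℝ) : Measurable (fun y : ℝ => 1 / (y * (1 + Real.exp (l / y)))) :=
  measurable_const.div
    (measurable_id.mul (measurable_const.add (Real.measurable_exp.comp (measurable_div_fun l))))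

lemma measurable_gint (l : ℝ) :
    Measurable (fun y : ℝ => binEnt (1 / (1 + Real.exp (l / y)))) := by
  exact continuous_binEnt.measurable.comp
    (measurable_const.div
      (measurable_const.add (Real.measurable_exp.comp (measurable_div_fun l))))

lemma p_mem {l y : ℝ} (hl : 0 < l) (hy : 0 < y) :
    1 / (1 + Real.exp (l / y)) ∈ Set.Ioo (0:ℝ) (1/2) := by
  have he : 1 < Real.exp (l / y) := Real.one_lt_exp_iff.2 (div_pos hl hy)
  have h0 : (0:ℝ) < 1 + Real.exp (l / y) := by positivity
  constructor
  · positivity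
  · exact one_div_lt_one_div_of_lt two_pos (by linarith)

lemma p_mem01 {l y : ℝ} : 1 / (1 + Real.exp (l / y)) ∈ Set.Icc (0:ℝ) 1 := by
  have he : 0 < Real.exp (l / y) := Real.exp_pos _
  constructor
  · positivity
  · rw [div_le_one (by positivity)]; linarith

lemma f_pos {l y : ℝ} (hy : 0 < y) : 0 < 1 / (y * (1 + Real.exp (l / y))) := by
  have he : 0 < Real.exp (l / y) := Real.exp_pos _
  positivity

lemma f_le {l y : ℝ} (hl : 0 < l) (hy : 0 < y) :
    1 / (y * (1 + Real.exp (l / y))) ≤ 1 / l := by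
  have h1 : l / y + 1 ≤ Real.exp (l / y) := Real.add_one_le_exp _
  have h2 : l ≤ y * (1 + Real.exp (l / y)) := by
    have : y * (l / y) = l := by field_simp
    nlinarith [Real.exp_pos (l / y), this]
  exact one_div_le_one_div_of_le hl h2

lemma intInt_f {l : ℝ} (hl : 0 < l) :
    IntervalIntegrable (fun y : ℝ => 1 / (y * (1 + Real.exp (l / y)))) volume 0 1 := by
  rw [intervalIntegrable_iff_integrableOn_Ioc_of_le zero_le_one]
  apply Integrable.mono' (g := fun _ => 1 / l)
    (integrableOn_const (by simp) (by simp))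
    ((measurable_fint l).aestronglyMeasurable)
  rw [ae_restrict_iff' measurableSet_Ioc]
  filter_upwards with y hy
  rw [Real.norm_eq_abs, abs_of_nonneg (f_pos hy.1).le]
  exact f_le hl hy.1

lemma intInt_g (l : ℝ) :
    IntervalIntegrable (fun y : ℝ => binEnt (1 / (1 + Real.exp (l / y)))) volume 0 1 := by
  rw [intervalIntegrable_iff_integrableOn_Ioc_of_le zero_le_one]
  apply Integrable.mono' (g := fun _ => 1)
    (integrableOn_const (by simp) (by simp))
    ((measurable_gint l).aestronglyMeasurable)
  rw [ae_restrict_iff' measurableSet_Ioc]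
  filter_upwards with y hy
  rw [Real.norm_eq_abs, abs_of_nonneg (binEnt_nonneg p_mem01.1 p_mem01.2)]
  exact binEnt_le_one _

lemma F_le_F {l1 l2 : ℝ} (h2 : 0 < l2) (h : l2 ≤ l1) :
    (∫ y in (0:ℝ)..1, 1 / (y * (1 + Real.exp (l1 / y)))) ≤
      ∫ y in (0:ℝ)..1, 1 / (y * (1 + Real.exp (l2 / y))) := by
  apply intervalIntegral.integral_mono_on zero_le_one (intInt_f (h2.trans_le h)) (intInt_f h2)
  intro y hy
  rcases eq_or_lt_of_le hy.1 with rfl | hy0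
  · simp
  · have hd : y * (1 + Real.exp (l2 / y)) ≤ y * (1 + Real.exp (l1 / y)) := by
      have h1 : l2 / y ≤ l1 / y := by gcongr
      have h2 := Real.exp_le_exp.2 h1
      nlinarith
    have he2 : 0 < Real.exp (l2 / y) := Real.exp_pos _
    exact one_div_le_one_div_of_le (mul_pos hy0 (by positivity)) hd

lemma F_pos {l : ℝ} (hl : 0 < l) :
    0 < ∫ y in (0:ℝ)..1, 1 / (y * (1 + Real.exp (l / y))) :=
  intervalIntegral.intervalIntegral_pos_of_pos_on (intInt_f hl) (fun y hy => f_pos hy.1) zero_lt_one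

lemma g_lt_g {l1 l2 y : ℝ} (h2 : 0 < l2) (h : l2 < l1) (hy : 0 < y) :
    binEnt (1 / (1 + Real.exp (l1 / y))) < binEnt (1 / (1 + Real.exp (l2 / y))) := by
  have hp1 := p_mem (h2.trans h) hy
  have hp2 := p_mem h2 hy
  have hplt : 1 / (1 + Real.exp (l1 / y)) < 1 / (1 + Real.exp (l2 / y)) := by
    have := Real.exp_lt_exp.2 (div_lt_div_of_pos_right h hy)
    have h0 : (0:ℝ) < 1 + Real.exp (l2 / y) := by positivity
    exact one_div_lt_one_div_of_lt h0 (by linarith)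
  have hAB : Real.binEntropy (1 / (1 + Real.exp (l1 / y))) <
      Real.binEntropy (1 / (1 + Real.exp (l2 / y))) := by
    apply Real.binEntropy_strictMonoOn ?_ ?_ hplt
    · exact ⟨hp1.1.le, by rw [show (2:ℝ)⁻¹ = 1/2 by norm_num]; exact hp1.2.le⟩
    · exact ⟨hp2.1.le, by rw [show (2:ℝ)⁻¹ = 1/2 by norm_num]; exact hp2.2.le⟩
  rw [binEnt_eq, binEnt_eq]
  gcongr

lemma G_lt {l1 l2 : ℝ} (h2 : 0 < l2) (h : l2 < l1) :
    (∫ y in (0:ℝ)..1, binEnt (1 / (1 + Real.exp (l1 / y)))) <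
      ∫ y in (0:ℝ)..1, binEnt (1 / (1 + Real.exp (l2 / y))) := by
  apply intervalIntegral.integral_lt_integral_of_ae_le_of_measure_setOf_lt_ne_zero zero_le_one
    (intInt_g l1) (intInt_g l2)
  · rw [Filter.EventuallyLE, ae_restrict_iff' measurableSet_Ioc]
    filter_upwards with y hy
    exact (g_lt_g h2 h hy.1).le
  · have hsub : Ioc (0:ℝ) 1 ⊆ {y | binEnt (1 / (1 + Real.exp (l1 / y))) <
        binEnt (1 / (1 + Real.exp (l2 / y)))} := fun y hy => g_lt_g h2 h hy.1
    have h1 : (volume.restrict (Ioc (0:ℝ) 1)) (Ioc (0:ℝ) 1) = 1 := by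
      rw [Measure.restrict_apply_self]
      simp [Real.volume_Ioc]
    have := measure_mono (μ := volume.restrict (Ioc (0:ℝ) 1)) hsub
    rw [h1] at this
    intro h0
    rw [h0] at this
    simp at this

/-- If `lam x` is, for each `x > 0`, the (unique) positive solution of
`∫₀¹ 1/(y(1+e^{λ/y})) dy = x`, then `x ↦ c_x = ∫₀¹ h(1/(1+e^{lam x / y})) dy`
is strictly increasing on `(0,∞)`, tends to `0` as `x → 0⁺`, and tends to `1`
as `x → ∞`. -/
theorem c_x_strictMono_and_limits (lam : ℝ → ℝ)
    (hlam : ∀ x : ℝ, 0 < x → 0 < lam x ∧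
      (∫ y in (0:ℝ)..1, 1 / (y * (1 + Real.exp (lam x / y)))) = x) :
    StrictMonoOn (fun x : ℝ => ∫ y in (0:ℝ)..1, binEnt (1 / (1 + Real.exp (lam x / y))))
      (Set.Ioi 0) ∧
    Tendsto (fun x : ℝ => ∫ y in (0:ℝ)..1, binEnt (1 / (1 + Real.exp (lam x / y))))
      (nhdsWithin 0 (Set.Ioi 0)) (nhds 0) ∧
    Tendsto (fun x : ℝ => ∫ y in (0:ℝ)..1, binEnt (1 / (1 + Real.exp (lam x / y))))
      atTop (nhds 1) := by
  have hanti : ∀ x1 x2 : ℝ, 0 < x1 → 0 < x2 → x1 < x2 → lam x2 < lam x1 := by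
    intro x1 x2 h1 h2 hlt
    by_contra hc
    push_neg at hc
    have hF := F_le_F (hlam x1 h1).1 hc
    rw [(hlam x1 h1).2, (hlam x2 h2).2] at hF
    linarith
  have hmono : StrictMonoOn
      (fun x : ℝ => ∫ y in (0:ℝ)..1, binEnt (1 / (1 + Real.exp (lam x / y))))
      (Set.Ioi 0) := by
    intro x1 h1 x2 h2 hlt
    exact G_lt (hlam x2 h2).1 (hanti x1 x2 h1 h2 hlt)
  have hlam_top : Tendsto lam (nhdsWithin 0 (Set.Ioi 0)) atTop := by
    rw [tendsto_atTop]
    intro M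
    have hM' : (0:ℝ) < max M 1 := lt_of_lt_of_le one_pos (le_max_right _ _)
    have hF := F_pos hM'
    filter_upwards [Ioo_mem_nhdsGT hF] with x hx
    by_contra hc
    push_neg at hc
    have hle : lam x ≤ max M 1 := (hc.trans_le (le_max_left _ _)).le
    have hFF := F_le_F (hlam x hx.1).1 hle
    rw [(hlam x hx.1).2] at hFF
    exact absurd hx.2 (not_lt.2 hFF)
  have hlam_zero : Tendsto lam atTop (nhds (0:ℝ)) := by
    rw [tendsto_order]
    constructor
    · intro a ha
      filter_upwards [eventually_gt_atTop (0:ℝ)] with x hx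
      exact ha.trans (hlam x hx).1
    · intro a ha
      filter_upwards [eventually_gt_atTop
        (max (∫ y in (0:ℝ)..1, 1 / (y * (1 + Real.exp (a / y)))) 0)] with x hx
      have hx0 : 0 < x := lt_of_le_of_lt (le_max_right _ _) hx
      by_contra hc
      push_neg at hc
      have hFF := F_le_F ha hc
      rw [(hlam x hx0).2] at hFF
      exact absurd hFF (not_le.2 ((le_max_left _ _).trans_lt hx))
  have hmeas : ∀ x : ℝ, AEStronglyMeasurable
      (fun y => binEnt (1 / (1 + Real.exp (lam x / y)))) (volume.restrict (Ioc (0:ℝ) 1)) :=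
    fun x => (measurable_gint (lam x)).aestronglyMeasurable
  have hbound : ∀ x : ℝ, ∀ᵐ y ∂(volume.restrict (Ioc (0:ℝ) 1)),
      ‖binEnt (1 / (1 + Real.exp (lam x / y)))‖ ≤ 1 := by
    intro x
    rw [ae_restrict_iff' measurableSet_Ioc]
    filter_upwards with y hy
    rw [Real.norm_eq_abs, abs_of_nonneg (binEnt_nonneg p_mem01.1 p_mem01.2)]
    exact binEnt_le_one _
  have hbi : Integrable (fun _ : ℝ => (1:ℝ)) (volume.restrict (Ioc (0:ℝ) 1)) :=
    integrableOn_const (by simp) (by simp)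
  have hrw : (fun x : ℝ => ∫ y in (0:ℝ)..1, binEnt (1 / (1 + Real.exp (lam x / y))))
      = fun x : ℝ => ∫ y in Ioc (0:ℝ) 1, binEnt (1 / (1 + Real.exp (lam x / y))) := by
    funext x
    exact intervalIntegral.integral_of_le zero_le_one
  refine ⟨hmono, ?_, ?_⟩
  · rw [hrw]
    have hlim : ∀ᵐ y ∂(volume.restrict (Ioc (0:ℝ) 1)),
        Tendsto (fun x => binEnt (1 / (1 + Real.exp (lam x / y))))
          (nhdsWithin 0 (Set.Ioi 0)) (nhds 0) := by
      rw [ae_restrict_iff' measurableSet_Ioc]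
      filter_upwards with y hy
      have h1 : Tendsto (fun x => lam x / y) (nhdsWithin 0 (Set.Ioi 0)) atTop :=
        Tendsto.atTop_div_const hy.1 hlam_top
      have h2 : Tendsto (fun x => 1 + Real.exp (lam x / y)) (nhdsWithin 0 (Set.Ioi 0)) atTop :=
        tendsto_atTop_add_const_left _ 1 (Real.tendsto_exp_atTop.comp h1)
      have h3 : Tendsto (fun x => 1 / (1 + Real.exp (lam x / y)))
          (nhdsWithin 0 (Set.Ioi 0)) (nhds 0) := by
        simpa [one_div, Pi.inv_def] using h2.inv_tendsto_atTop
      have h4 := (continuous_binEnt.tendsto 0).comp h3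
      have h0 : binEnt 0 = 0 := by simp [binEnt]
      rw [h0] at h4
      simpa [Function.comp_def] using h4
    have := tendsto_integral_filter_of_dominated_convergence
      (μ := volume.restrict (Ioc (0:ℝ) 1))
      (F := fun x y => binEnt (1 / (1 + Real.exp (lam x / y))))
      (f := fun _ => (0:ℝ)) (bound := fun _ => 1)
      (Eventually.of_forall hmeas) (Eventually.of_forall hbound) hbi hlim
    simpa using this
  · rw [hrw]
    have hlim : ∀ᵐ y ∂(volume.restrict (Ioc (0:ℝ) 1)),
        Tendsto (fun x => binEnt (1 / (1 + Real.exp (lam x / y)))) atTop (nhds 1) := by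
      rw [ae_restrict_iff' measurableSet_Ioc]
      filter_upwards with y hy
      have hcont : Continuous fun l : ℝ => binEnt (1 / (1 + Real.exp (l / y))) := by
        apply continuous_binEnt.comp
        apply Continuous.div continuous_const
          (continuous_const.add (Real.continuous_exp.comp (continuous_id.div_const y)))
        intro l
        have := Real.exp_pos (l / y)
        show 1 + Real.exp (l / y) ≠ 0
        positivity
      have h4 := (hcont.tendsto 0).comp hlam_zero
      have h0 : binEnt (1 / (1 + Real.exp (0 / y))) = 1 := by
        rw [zero_div, Real.exp_zero]
        norm_num [binEnt_half]
      rw [h0] at h4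
      simpa [Function.comp_def] using h4
    have := tendsto_integral_filter_of_dominated_convergence
      (μ := volume.restrict (Ioc (0:ℝ) 1))
      (F := fun x y => binEnt (1 / (1 + Real.exp (lam x / y))))
      (f := fun _ => (1:ℝ)) (bound := fun _ => 1)
      (Eventually.of_forall hmeas) (Eventually.of_forall hbound) hbi hlim
    simpa [integral_const, Measure.restrict_apply_univ, Real.volume_Ioc] using this
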